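/- Let Φ : B × (−ε,ε) → ℝ³ (B the open unit ball of ℝ²) be a C² homeomorphism with Jacobian bounded away from 0 and ∞, and let f ∈ H²(Φ(B×(−ε,ε)); ℝ³) satisfy f ∘ Φ(u,0) = 0 for a.e. u ∈ B and |∂_t Φ| = 1. If moreover the Jacobian ratio bound |det DΦ(u,t)|/|det DΦ(u,s)| ≤ 2 holds for all (u,t,s), then ∫ |f|² dx ≤ 2ε² ∫ |∇f|² dx over Φ(B×(−ε,ε)). -/

import Mathlib

open MeasureTheory
noncomputable section

/-- Three-dimensional Euclidean space. -/
abbrev E3 := EuclideanSpace ℝ (Fin 3)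

/-- View a vector of `E3` as a plain function `Fin 3 → ℝ`. -/
def toPi (x : E3) : Fin 3 → ℝ := (WithLp.equiv 2 (Fin 3 → ℝ)) x

/-- Build a vector of `E3` from a plain function `Fin 3 → ℝ`. -/
def ofPi (x : Fin 3 → ℝ) : E3 := (WithLp.equiv 2 (Fin 3 → ℝ)).symm x

/-- Cross product on `E3`. -/
def cross3 (a b : E3) : E3 := ofPi (crossProduct (toPi a) (toPi b))

/-- Partial derivative `∂_j v_i` of a vector field. -/
def pd (v : E3 → E3) (x : E3) (j i : Fin 3) : ℝ :=
  toPi (fderiv ℝ v x (EuclideanSpace.single j 1)) i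

/-- Divergence of a vector field. -/
def div3 (v : E3 → E3) (x : E3) : ℝ := ∑ i, pd v x i i

/-- Curl of a vector field. -/
def curl3 (v : E3 → E3) (x : E3) : E3 :=
  ofPi ![pd v x 1 2 - pd v x 2 1, pd v x 2 0 - pd v x 0 2, pd v x 0 1 - pd v x 1 0]

/-- Squared Frobenius norm of the gradient of a vector field. -/
def gradSq (v : E3 → E3) (x : E3) : ℝ :=
  ∑ j, ‖fderiv ℝ v x (EuclideanSpace.single j 1)‖ ^ 2

/-- Squared Frobenius norm of the second gradient of a vector field. -/
def grad2Sq (v : E3 → E3) (x : E3) : ℝ :=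
  ∑ j, ∑ k, ‖fderiv ℝ (fderiv ℝ v) x (EuclideanSpace.single j 1) (EuclideanSpace.single k 1)‖ ^ 2

/-- Membership in `H¹(Ω, ℝ³)` (classical-derivative formulation). -/
def MemH1 (Ω : Set E3) (v : E3 → E3) : Prop :=
  DifferentiableOn ℝ v Ω ∧ IntegrableOn (fun x => ‖v x‖ ^ 2) Ω ∧
    IntegrableOn (fun x => gradSq v x) Ω

/-- Membership in `H²(Ω, ℝ³)` (classical-derivative formulation). -/
def MemH2 (Ω : Set E3) (v : E3 → E3) : Prop :=
  MemH1 Ω v ∧ DifferentiableOn ℝ (fderiv ℝ v) Ω ∧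
    IntegrableOn (fun x => grad2Sq v x) Ω

/-- `Ω` is a bounded open set whose boundary is the zero level set of a `C³`
defining function `f` with nonvanishing gradient on the boundary. -/
def C3DefiningFn (Ω : Set E3) (f : E3 → ℝ) : Prop :=
  IsOpen Ω ∧ Bornology.IsBounded Ω ∧ ContDiff ℝ 3 f ∧
    Ω = {x | f x < 0} ∧ ∀ x ∈ frontier Ω, fderiv ℝ f x ≠ 0

/-- Outward unit normal induced by a defining function. -/
def normalOf (f : E3 → ℝ) (x : E3) : E3 := ‖gradient f x‖⁻¹ • gradient f x

end

open MeasureTheory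
noncomputable section

abbrev E2 := EuclideanSpace ℝ (Fin 2)

/-- Canonical basis of `E2 × ℝ`. -/
def tubBasis : Fin 3 → E2 × ℝ :=
  ![(EuclideanSpace.single 0 1, (0:ℝ)), (EuclideanSpace.single 1 1, (0:ℝ)), (0, (1:ℝ))]

/-- Absolute value of the Jacobian determinant of a chart `Φ : E2 × ℝ → E3`. -/
def tubJac (Φ : E2 × ℝ → E3) (p : E2 × ℝ) : ℝ :=
  |(Matrix.of fun i j => toPi (fderiv ℝ Φ p (tubBasis j)) i).det|

end

noncomputable section

namespace Tub

/-- Linear equivalence `E3 ≃ E2 × ℝ`. -/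
def Alin : E3 ≃ₗ[ℝ] E2 × ℝ where
  toFun x := ((WithLp.equiv 2 (Fin 2 → ℝ)).symm (fun i => x i.castSucc), x 2)
  invFun p := (WithLp.equiv 2 (Fin 3 → ℝ)).symm (Fin.snoc ((WithLp.equiv 2 (Fin 2 → ℝ)) p.1) p.2)
  map_add' x y := by
    refine Prod.ext ?_ rfl
    ext i
    simp [WithLp.equiv_symm_apply, PiLp.toLp_apply]
  map_smul' c x := by
    refine Prod.ext ?_ rfl
    ext i
    simp [WithLp.equiv_symm_apply, PiLp.toLp_apply]
  left_inv x := by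
    ext i
    simp only [WithLp.equiv_symm_apply, WithLp.equiv_apply, PiLp.toLp_apply]
    refine Fin.lastCases ?_ (fun j => ?_) i
    · simp [Fin.snoc]
    · simp [Fin.snoc_castSucc]
  right_inv p := by
    refine Prod.ext ?_ ?_
    · ext i
      simp [WithLp.equiv_symm_apply, WithLp.equiv_apply, PiLp.toLp_apply, Fin.snoc_castSucc]
    · simp [WithLp.equiv_symm_apply, PiLp.toLp_apply]
      rfl

def Actl : E3 ≃L[ℝ] E2 × ℝ := Alin.toContinuousLinearEquiv

lemma Actl_apply (x : E3) :
    Actl x = ((WithLp.equiv 2 (Fin 2 → ℝ)).symm (fun i => x i.castSucc), x 2) := rfl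

lemma measurePreserving_Actl : MeasurePreserving (⇑Actl) volume volume := by
  have m1 := EuclideanSpace.volume_preserving_symm_measurableEquiv_toLp (Fin 3)
  have m2 := volume_preserving_piFinSuccAbove (fun _ : Fin 3 => ℝ) 2
  have m3 : MeasurePreserving (Prod.swap : ℝ × (Fin 2 → ℝ) → (Fin 2 → ℝ) × ℝ)
      volume volume := by
    rw [Measure.volume_eq_prod, Measure.volume_eq_prod]
    exact Measure.measurePreserving_swap
  have m4 : MeasurePreserving
      (Prod.map (⇑(MeasurableEquiv.toLp 2 (Fin 2 → ℝ))) (id : ℝ → ℝ))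
      volume volume := by
    rw [Measure.volume_eq_prod, Measure.volume_eq_prod]
    exact ((EuclideanSpace.volume_preserving_symm_measurableEquiv_toLp (Fin 2)).symm).prod
      (MeasurePreserving.id volume)
  have hcomp := m4.comp (m3.comp (m2.comp m1))
  have heq : (Prod.map (⇑(MeasurableEquiv.toLp 2 (Fin 2 → ℝ))) (id : ℝ → ℝ)) ∘
      (Prod.swap : ℝ × (Fin 2 → ℝ) → (Fin 2 → ℝ) × ℝ) ∘
      (⇑(MeasurableEquiv.piFinSuccAbove (fun _ : Fin 3 => ℝ) 2)) ∘
      (⇑(MeasurableEquiv.toLp 2 (Fin 3 → ℝ)).symm) = ⇑Actl := by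
    funext x
    have h2 : (2 : Fin 3) = Fin.last 2 := rfl
    simp only [Function.comp_apply, MeasurableEquiv.piFinSuccAbove_apply, Prod.swap_prod_mk,
      Prod.map_apply, id_eq, Actl_apply]
    refine Prod.ext ?_ rfl
    ext i
    simp [Fin.removeNth, h2, Fin.succAbove_last, Fin.init]
    fin_cases i <;> rfl
  rw [← heq]
  exact hcomp

end Tub

namespace Tub

/-- basis of E3 -/
def b3 : Module.Basis (Fin 3) ℝ E3 := (Pi.basisFun ℝ (Fin 3)).map (WithLp.linearEquiv 2 ℝ (Fin 3 → ℝ)).symm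

lemma b3_apply (j : Fin 3) : b3 j = EuclideanSpace.single j 1 := by
  rw [b3, Module.Basis.map_apply, Pi.basisFun_apply]
  rfl

lemma b3_repr (x : E3) (i : Fin 3) : b3.repr x i = toPi x i := by
  rw [b3]
  simp [toPi]

lemma Actl_single (j : Fin 3) : Actl (EuclideanSpace.single j 1) = tubBasis j := by
  fin_cases j <;>
  · refine Prod.ext ?_ ?_ <;>
    · simp only [Actl_apply, tubBasis]
      try ext i
      try fin_cases i
      all_goals simp [EuclideanSpace.single, WithLp.equiv_symm_apply, WithLp.equiv_apply, PiLp.toLp_apply,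
        Pi.single, Function.update]
      all_goals rfl

/-- the key determinant identity -/
lemma abs_det_eq_tubJac (Φ : E2 × ℝ → E3) (p : E2 × ℝ) :
    |((fderiv ℝ Φ p).comp (Actl : E3 →L[ℝ] E2 × ℝ) : E3 →L[ℝ] E3).det| = tubJac Φ p := by
  have hdet : ((fderiv ℝ Φ p).comp (Actl : E3 →L[ℝ] E2 × ℝ) : E3 →L[ℝ] E3).det
      = (Matrix.of fun i j => toPi (fderiv ℝ Φ p (tubBasis j)) i).det := by
    have := LinearMap.det_toMatrix b3
      (((fderiv ℝ Φ p).comp (Actl : E3 →L[ℝ] E2 × ℝ) : E3 →L[ℝ] E3) : E3 →ₗ[ℝ] E3)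
    rw [ContinuousLinearMap.det, ← this]
    congr 1
    ext i j
    rw [LinearMap.toMatrix_apply, b3_apply]
    simp only [ContinuousLinearMap.coe_coe, ContinuousLinearMap.comp_apply,
      ContinuousLinearEquiv.coe_coe, Actl_single, Matrix.of_apply]
    rw [b3_repr]
  rw [tubJac, hdet]

end Tub

namespace Tub

variable {ε : ℝ} {Φ : E2 × ℝ → E3} {S : Set (E2 × ℝ)}

lemma hS_open (hS : S = (Metric.ball (0:E2) 1) ×ˢ Set.Ioo (-ε) ε) : IsOpen S := by
  rw [hS]; exact Metric.isOpen_ball.prod isOpen_Ioo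

lemma hS_meas (hS : S = (Metric.ball (0:E2) 1) ×ˢ Set.Ioo (-ε) ε) : MeasurableSet S :=
  (hS_open hS).measurableSet

lemma hΦat (hS : S = (Metric.ball (0:E2) 1) ×ˢ Set.Ioo (-ε) ε) (hΦ : ContDiffOn ℝ 2 Φ S)
    {p : E2 × ℝ} (hp : p ∈ S) : HasFDerivAt Φ (fderiv ℝ Φ p) p := by
  have : ContDiffAt ℝ 2 Φ p := hΦ.contDiffAt ((hS_open hS).mem_nhds hp)
  exact (this.differentiableAt (by norm_num)).hasFDerivAt

/-- change of variables -/
lemma cov (hS : S = (Metric.ball (0:E2) 1) ×ˢ Set.Ioo (-ε) ε) (hΦ : ContDiffOn ℝ 2 Φ S)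
    (hinj : Set.InjOn Φ S) (g : E3 → ENNReal) :
    ∫⁻ x in Φ '' S, g x = ∫⁻ p in S, ENNReal.ofReal (tubJac Φ p) * g (Φ p) := by
  set A := Actl
  set s' : Set E3 := ⇑A ⁻¹' S with hs'
  have hs'meas : MeasurableSet s' := (hS_meas hS).preimage A.continuous.measurable
  have himg : Φ '' S = (Φ ∘ ⇑A) '' s' := by
    rw [Set.image_comp, Set.image_preimage_eq S A.surjective]
  have hderiv : ∀ q ∈ s', HasFDerivWithinAt (Φ ∘ ⇑A)
      ((fderiv ℝ Φ (A q)).comp (A : E3 →L[ℝ] E2 × ℝ)) s' q := by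
    intro q hq
    exact ((hΦat hS hΦ hq).comp q (A.toContinuousLinearMap.hasFDerivAt)).hasFDerivWithinAt
  have hinj' : Set.InjOn (Φ ∘ ⇑A) s' := by
    intro a ha b hb hab
    exact A.injective (hinj ha hb hab)
  have := lintegral_image_eq_lintegral_abs_det_fderiv_mul volume hs'meas hderiv hinj' g
  rw [himg, this]
  have hpre := measurePreserving_Actl.setLIntegral_comp_preimage_emb
    A.toHomeomorph.measurableEmbedding
    (fun p => ENNReal.ofReal (tubJac Φ p) * g (Φ p)) S
  rw [← hpre]
  refine setLIntegral_congr_fun hs'meas (fun q _ => ?_)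
  rw [abs_det_eq_tubJac]
  rfl

/-- the image is open -/
lemma himg_open (hS : S = (Metric.ball (0:E2) 1) ×ˢ Set.Ioo (-ε) ε) (hΦ : ContDiffOn ℝ 2 Φ S)
    {c : ℝ} (hc : 0 < c) (hJ : ∀ p ∈ S, c ≤ tubJac Φ p) : IsOpen (Φ '' S) := by
  set A := Actl
  set s' : Set E3 := ⇑A ⁻¹' S with hs'
  have hs'open : IsOpen s' := (hS_open hS).preimage A.continuous
  have himg : Φ '' S = (Φ ∘ ⇑A) '' s' := by
    rw [Set.image_comp, Set.image_preimage_eq S A.surjective]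
  rw [himg]
  rw [isOpen_iff_mem_nhds]
  rintro x ⟨q, hq, rfl⟩
  have hcd : ContDiffAt ℝ 2 (Φ ∘ ⇑A) q := by
    have : ContDiffOn ℝ 2 (Φ ∘ ⇑A) s' :=
      hΦ.comp (A.toContinuousLinearMap.contDiff.contDiffOn) (fun y hy => hy)
    exact this.contDiffAt (hs'open.mem_nhds hq)
  have hstrict : HasStrictFDerivAt (Φ ∘ ⇑A) (fderiv ℝ (Φ ∘ ⇑A) q) q :=
    hcd.hasStrictFDerivAt (by norm_num)
  have hfd : fderiv ℝ (Φ ∘ ⇑A) q = (fderiv ℝ Φ (A q)).comp (A : E3 →L[ℝ] E2 × ℝ) :=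
    ((hΦat hS hΦ hq).comp q (A.toContinuousLinearMap.hasFDerivAt)).fderiv
  have hdetne : ((fderiv ℝ Φ (A q)).comp (A : E3 →L[ℝ] E2 × ℝ) : E3 →L[ℝ] E3).det ≠ 0 := by
    intro h
    have := abs_det_eq_tubJac Φ (A q)
    rw [h, abs_zero] at this
    have := hJ (A q) hq
    linarith [this, hc]
  set T := ((fderiv ℝ Φ (A q)).comp (A : E3 →L[ℝ] E2 × ℝ) : E3 →L[ℝ] E3)
  set e : E3 ≃L[ℝ] E3 :=
    (LinearMap.equivOfDetNeZero (T : E3 →ₗ[ℝ] E3) hdetne).toContinuousLinearEquiv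
  have heT : (e : E3 →L[ℝ] E3) = T := by
    ext y
    rfl
  have hstrict' : HasStrictFDerivAt (Φ ∘ ⇑A) (e : E3 →L[ℝ] E3) q := by
    rw [heT, ← hfd]; exact hstrict
  have hmap := hstrict'.map_nhds_eq_of_equiv
  rw [← hmap]
  exact Filter.image_mem_map (hs'open.mem_nhds hq)

/-- opnorm ≤ sqrt Frobenius -/
lemma opNorm_le_sqrt_gradSq (v : E3 → E3) (x : E3) :
    ‖fderiv ℝ v x‖ ≤ Real.sqrt (gradSq v x) := by
  set T := fderiv ℝ v x
  refine ContinuousLinearMap.opNorm_le_bound T (Real.sqrt_nonneg _) (fun y => ?_)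
  have hy : y = ∑ i, y i • EuclideanSpace.single i 1 := by
    ext j
    simp only [Fin.sum_univ_three, PiLp.add_apply, PiLp.smul_apply, EuclideanSpace.single_apply,
      smul_eq_mul]
    fin_cases j <;> simp
  calc ‖T y‖ = ‖∑ i, y i • T (EuclideanSpace.single i 1)‖ := by
          conv_lhs => rw [hy]
          rw [map_sum]
          simp
    _ ≤ ∑ i, ‖y i • T (EuclideanSpace.single i 1)‖ := norm_sum_le _ _
    _ = ∑ i, |y i| * ‖T (EuclideanSpace.single i 1)‖ := by
          simp [norm_smul]
    _ ≤ Real.sqrt (∑ i, |y i| ^ 2) * Real.sqrt (∑ i, ‖T (EuclideanSpace.single i 1)‖ ^ 2) := by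
          have h := Finset.sum_mul_sq_le_sq_mul_sq Finset.univ
            (fun i => |y i|) (fun i => ‖T (EuclideanSpace.single i 1)‖)
          have h1 : (0:ℝ) ≤ ∑ i, |y i| * ‖T (EuclideanSpace.single i 1)‖ :=
            Finset.sum_nonneg fun i _ => mul_nonneg (abs_nonneg _) (norm_nonneg _)
          calc ∑ i, |y i| * ‖T (EuclideanSpace.single i 1)‖
              = Real.sqrt ((∑ i, |y i| * ‖T (EuclideanSpace.single i 1)‖) ^ 2) := by
                rw [Real.sqrt_sq h1]
            _ ≤ Real.sqrt ((∑ i, |y i| ^ 2) * ∑ i, ‖T (EuclideanSpace.single i 1)‖ ^ 2) :=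
                Real.sqrt_le_sqrt h
            _ = _ := Real.sqrt_mul (Finset.sum_nonneg fun i _ => sq_nonneg _) _
    _ = Real.sqrt (gradSq v x) * ‖y‖ := by
          rw [mul_comm, EuclideanSpace.norm_eq, gradSq]
          simp [Real.norm_eq_abs, T]

end Tub

namespace Tub

lemma sqrt_le_one_add {x : ℝ} (hx : 0 ≤ x) : Real.sqrt x ≤ 1 + x := by
  rcases le_total x 1 with h | h
  · calc Real.sqrt x ≤ 1 := Real.sqrt_le_one.mpr h
      _ ≤ 1 + x := by linarith
  · calc Real.sqrt x ≤ Real.sqrt (x ^ 2) := Real.sqrt_le_sqrt (by nlinarith)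
      _ = x := Real.sqrt_sq (by linarith)
      _ ≤ 1 + x := by linarith

/-- Cauchy–Schwarz for the integral of a nonnegative function. -/
lemma cs_integral (m : Measure ℝ) [IsFiniteMeasure m] (g : ℝ → ℝ)
    (hpos : ∀ x, 0 ≤ g x) (hm : AEStronglyMeasurable g m)
    (hg2 : Integrable (fun x => g x ^ 2) m) :
    (∫ x, g x ∂m) ^ 2 ≤ (m Set.univ).toReal * ∫ x, g x ^ 2 ∂m := by
  have hMem : MemLp g 2 m := (memLp_two_iff_integrable_sq hm).mpr hg2
  have hpq : Real.HolderConjugate 2 2 := Real.HolderConjugate.two_two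
  have hconst : MemLp (fun _ : ℝ => (1:ℝ)) 2 m := memLp_const 1
  have h2 : (ENNReal.ofReal (2:ℝ)) = 2 := by norm_num
  have h := integral_mul_le_Lp_mul_Lq_of_nonneg hpq
    (Filter.Eventually.of_forall (fun x => zero_le_one))
    (Filter.Eventually.of_forall hpos) (h2 ▸ hconst) (h2 ▸ hMem)
  simp only [one_mul] at h
  have hA : (0:ℝ) ≤ ∫ x, (1:ℝ) ^ (2:ℝ) ∂m := by
    apply integral_nonneg; intro x; positivity
  have hB : (0:ℝ) ≤ ∫ x, g x ^ (2:ℝ) ∂m := by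
    apply integral_nonneg; intro x
    show (0:ℝ) ≤ g x ^ (2:ℝ)
    rw [Real.rpow_two]
    positivity
  have hsq := pow_le_pow_left₀ (integral_nonneg hpos) h 2
  have hrw : ((∫ x, (1:ℝ) ^ (2:ℝ) ∂m) ^ (1/2:ℝ) * (∫ x, g x ^ (2:ℝ) ∂m) ^ (1/2:ℝ)) ^ 2
      = (∫ x, (1:ℝ) ^ (2:ℝ) ∂m) * ∫ x, g x ^ (2:ℝ) ∂m := by
    rw [mul_pow]
    rw [show (1/2:ℝ) = ((2:ℕ):ℝ)⁻¹ by norm_num]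
    rw [Real.rpow_inv_natCast_pow hA (by norm_num), Real.rpow_inv_natCast_pow hB (by norm_num)]
  rw [hrw] at hsq
  have hone : ∫ x, (1:ℝ) ^ (2:ℝ) ∂m = (m Set.univ).toReal := by
    simp [Real.one_rpow]
    rfl
  have hg2' : ∫ x, g x ^ (2:ℝ) ∂m = ∫ x, g x ^ 2 ∂m := by
    refine integral_congr_ae (Filter.Eventually.of_forall fun x => ?_)
    show g x ^ (2:ℝ) = g x ^ (2:ℕ)
    rw [Real.rpow_two]
  rw [hone, hg2'] at hsq
  exact hsq

/-- ∫_{-ε}^{ε} |t| dt = ε² as a lintegral. -/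
lemma lintegral_abs_Ioo {ε : ℝ} (hε : 0 < ε) :
    ∫⁻ t in Set.Ioo (-ε) ε, ENNReal.ofReal |t| = ENNReal.ofReal (ε ^ 2) := by
  have hle : -ε ≤ ε := by linarith
  have hint : IntegrableOn (fun t : ℝ => |t|) (Set.Ioo (-ε) ε) := by
    rw [← intervalIntegrable_iff_integrableOn_Ioo_of_le hle]
    exact continuous_abs.intervalIntegrable _ _
  rw [← ofReal_integral_eq_lintegral_ofReal hint
    (Filter.Eventually.of_forall fun x => abs_nonneg x)]
  congr 1
  have h1 : ∫ t in Set.Ioo (-ε) ε, |t| = ∫ t in (-ε)..ε, |t| := by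
    rw [intervalIntegral.integral_of_le hle, ← integral_Ioc_eq_integral_Ioo]
  rw [h1]
  have hi1 : IntervalIntegrable (fun t : ℝ => |t|) volume (-ε) 0 :=
    continuous_abs.intervalIntegrable _ _
  have hi2 : IntervalIntegrable (fun t : ℝ => |t|) volume 0 ε :=
    continuous_abs.intervalIntegrable _ _
  rw [← intervalIntegral.integral_add_adjacent_intervals hi1 hi2]
  have e1 : ∫ t in (-ε)..(0:ℝ), |t| = ∫ t in (-ε)..(0:ℝ), -t := by
    refine intervalIntegral.integral_congr (fun x hx => ?_)
    rw [Set.uIcc_of_le (by linarith)] at hx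
    exact abs_of_nonpos hx.2
  have e2 : ∫ t in (0:ℝ)..ε, |t| = ∫ t in (0:ℝ)..ε, t := by
    refine intervalIntegral.integral_congr (fun x hx => ?_)
    rw [Set.uIcc_of_le (by linarith)] at hx
    exact abs_of_nonneg hx.1
  rw [e1, e2, intervalIntegral.integral_neg, integral_id, integral_id]
  ring

lemma measurable_gradSq (v : E3 → E3) : Measurable (gradSq v) := by
  unfold gradSq
  exact Finset.measurable_sum _ fun j _ =>
    ((measurable_fderiv_apply_const ℝ v _).norm.pow_const 2)

lemma measurable_tubJac (Φ : E2 × ℝ → E3) : Measurable (tubJac Φ) := by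
  unfold tubJac
  apply Measurable.abs
  have hentry : ∀ i j, Measurable (fun p => toPi (fderiv ℝ Φ p (tubBasis j)) i) := by
    intro i j
    have h1 : Measurable fun p => fderiv ℝ Φ p (tubBasis j) :=
      measurable_fderiv_apply_const ℝ Φ _
    have h2 : Continuous fun y : E3 => toPi y i := by
      have : Continuous (toPi) := by
        unfold toPi
        exact PiLp.continuous_ofLp 2 (fun _ : Fin 3 => ℝ)
      exact (continuous_apply i).comp this
    exact h2.measurable.comp h1
  simp only [Matrix.det_fin_three]
  simp only [Matrix.of_apply]
  fun_prop

end Tub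

namespace Tub

lemma gradSq_nonneg (v : E3 → E3) (x : E3) : 0 ≤ gradSq v x :=
  Finset.sum_nonneg fun j _ => pow_two_nonneg _

lemma pointwise_claim
    {ε : ℝ} (hε : 0 < ε) {Φ : E2 × ℝ → E3} {S : Set (E2 × ℝ)}
    (hS : S = (Metric.ball (0:E2) 1) ×ˢ Set.Ioo (-ε) ε) (hΦ : ContDiffOn ℝ 2 Φ S)
    (hopen : IsOpen (Φ '' S))
    (hunit : ∀ p ∈ S, ‖fderiv ℝ Φ p ((0:E2), (1:ℝ))‖ = 1)
    {f : E3 → E3} (hfd : DifferentiableOn ℝ f (Φ '' S))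
    {u : E2} (hu : u ∈ Metric.ball (0:E2) 1)
    (hf0 : f (Φ (u, 0)) = 0)
    (hGint : IntegrableOn (fun s => gradSq f (Φ (u, s))) (Set.Ioo (-ε) ε))
    {t : ℝ} (ht : t ∈ Set.Ioo (-ε) ε) :
    ‖f (Φ (u, t))‖ ^ 2 ≤ |t| * ∫ s in Set.Ioo (-ε) ε, gradSq f (Φ (u, s)) := by
  have h0mem : (0:ℝ) ∈ Set.Ioo (-ε) ε := ⟨by linarith, hε⟩
  set G : ℝ → ℝ := fun s => gradSq f (Φ (u, s)) with hG
  set D : ℝ → E3 := fun s => fderiv ℝ f (Φ (u, s)) (fderiv ℝ Φ (u, s) ((0:E2), (1:ℝ))) with hD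
  have hmemS : ∀ s ∈ Set.Ioo (-ε) ε, (u, s) ∈ S := by
    rw [hS]; exact fun s hs => ⟨hu, hs⟩
  have hasderiv : ∀ s ∈ Set.Ioo (-ε) ε, HasDerivAt (fun s => f (Φ (u, s))) (D s) s := by
    intro s hs
    have hc : HasDerivAt (fun s : ℝ => ((u, s) : E2 × ℝ)) ((0:E2), (1:ℝ)) s :=
      (hasDerivAt_const s u).prodMk (hasDerivAt_id s)
    have hΦ' : HasFDerivAt Φ (fderiv ℝ Φ (u, s)) (u, s) := hΦat hS hΦ (hmemS s hs)
    have h1 : HasDerivAt (fun s => Φ (u, s)) (fderiv ℝ Φ (u, s) ((0:E2), (1:ℝ))) s :=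
      hΦ'.comp_hasDerivAt s hc
    have hfd' : HasFDerivAt f (fderiv ℝ f (Φ (u, s))) (Φ (u, s)) :=
      (hfd.differentiableAt
        (hopen.mem_nhds (Set.mem_image_of_mem Φ (hmemS s hs)))).hasFDerivAt
    exact hfd'.comp_hasDerivAt s h1
  have hDle : ∀ s ∈ Set.Ioo (-ε) ε, ‖D s‖ ≤ Real.sqrt (G s) := by
    intro s hs
    calc ‖D s‖ ≤ ‖fderiv ℝ f (Φ (u, s))‖ * ‖fderiv ℝ Φ (u, s) ((0:E2), (1:ℝ))‖ :=
          ContinuousLinearMap.le_opNorm _ _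
      _ = ‖fderiv ℝ f (Φ (u, s))‖ := by rw [hunit (u, s) (hmemS s hs), mul_one]
      _ ≤ Real.sqrt (G s) := opNorm_le_sqrt_gradSq f (Φ (u, s))
  -- measurability of D on Ioo
  have hΦcont : ContinuousOn (fun s : ℝ => Φ (u, s)) (Set.Ioo (-ε) ε) := by
    refine hΦ.continuousOn.comp ((continuous_const.prodMk continuous_id).continuousOn) ?_
    exact fun s hs => hmemS s hs
  have hDaem : AEMeasurable D (volume.restrict (Set.Ioo (-ε) ε)) := by
    have m1 : AEMeasurable (fun s => fderiv ℝ f (Φ (u, s)))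
        (volume.restrict (Set.Ioo (-ε) ε)) :=
      (measurable_fderiv ℝ f).comp_aemeasurable (hΦcont.aemeasurable measurableSet_Ioo)
    have m2 : Measurable (fun s : ℝ => fderiv ℝ Φ (u, s) ((0:E2), (1:ℝ))) :=
      (measurable_fderiv_apply_const ℝ Φ _).comp
        ((continuous_const.prodMk continuous_id).measurable)
    have heval : Continuous (fun q : (E3 →L[ℝ] E3) × E3 => q.1 q.2) :=
      isBoundedBilinearMap_apply.continuous
    exact heval.measurable.comp_aemeasurable (m1.prodMk m2.aemeasurable)
  have hsub : Set.uIcc 0 t ⊆ Set.Ioo (-ε) ε :=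
    (Set.ordConnected_Ioo).uIcc_subset h0mem ht
  have hsub' : Set.uIoc 0 t ⊆ Set.Ioo (-ε) ε :=
    fun x hx => hsub (Set.Ioc_subset_Icc_self hx)
  have hressub : volume.restrict (Set.uIoc 0 t) ≤ volume.restrict (Set.Ioo (-ε) ε) :=
    Measure.restrict_mono hsub' le_rfl
  have hGnn : ∀ s, 0 ≤ G s := fun s => gradSq_nonneg f (Φ (u, s))
  have hD2le : ∀ s ∈ Set.Ioo (-ε) ε, ‖D s‖ ^ 2 ≤ G s := by
    intro s hs
    calc ‖D s‖ ^ 2 ≤ Real.sqrt (G s) ^ 2 :=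
          pow_le_pow_left₀ (norm_nonneg _) (hDle s hs) 2
      _ = G s := Real.sq_sqrt (hGnn s)
  haveI : IsFiniteMeasure (volume.restrict (Set.uIoc 0 t)) := by
    constructor
    rw [Measure.restrict_apply_univ, Set.uIoc, Real.volume_Ioc]
    exact ENNReal.ofReal_lt_top
  have hintD : IntervalIntegrable D volume 0 t := by
    rw [intervalIntegrable_iff]
    refine Integrable.mono' ((integrable_const (1:ℝ)).add (hGint.mono_set hsub'))
      ((hDaem.mono_measure hressub).aestronglyMeasurable) ?_
    filter_upwards [ae_restrict_mem measurableSet_uIoc] with s hs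
    calc ‖D s‖ ≤ Real.sqrt (G s) := hDle s (hsub' hs)
      _ ≤ 1 + G s := sqrt_le_one_add (hGnn s)
  have hFTC : ∫ y in (0:ℝ)..t, D y = f (Φ (u, t)) := by
    have := intervalIntegral.integral_eq_sub_of_hasDerivAt
      (fun s hs => hasderiv s (hsub hs)) hintD
    rw [this, hf0, sub_zero]
  have hnorm : ‖f (Φ (u, t))‖ ≤ ∫ s in Set.uIoc 0 t, ‖D s‖ := by
    rw [← hFTC]
    exact intervalIntegral.norm_integral_le_integral_norm_uIoc
  -- Cauchy-Schwarz
  have hD2int : IntegrableOn (fun s => ‖D s‖ ^ 2) (Set.uIoc 0 t) := by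
    refine Integrable.mono' (hGint.mono_set hsub')
      (((hDaem.mono_measure hressub).norm.pow_const 2).aestronglyMeasurable) ?_
    filter_upwards [ae_restrict_mem measurableSet_uIoc] with s hs
    rw [Real.norm_eq_abs, abs_of_nonneg (pow_two_nonneg _)]
    exact hD2le s (hsub' hs)
  have hcs := cs_integral (volume.restrict (Set.uIoc 0 t)) (fun s => ‖D s‖)
    (fun s => norm_nonneg _) ((hDaem.mono_measure hressub).norm.aestronglyMeasurable) hD2int
  have hV : ((volume.restrict (Set.uIoc 0 t)) Set.univ).toReal = |t| := by
    rw [Measure.restrict_apply_univ, Set.uIoc, Real.volume_Ioc, max_sub_min_eq_abs]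
    simp
  rw [hV] at hcs
  have hGmono : ∫ s in Set.uIoc 0 t, ‖D s‖ ^ 2 ≤ ∫ s in Set.Ioo (-ε) ε, G s := by
    calc ∫ s in Set.uIoc 0 t, ‖D s‖ ^ 2 ≤ ∫ s in Set.uIoc 0 t, G s := by
          refine integral_mono_ae hD2int (hGint.mono_set hsub') ?_
          filter_upwards [ae_restrict_mem measurableSet_uIoc] with s hs
          exact hD2le s (hsub' hs)
      _ ≤ ∫ s in Set.Ioo (-ε) ε, G s := by
          refine setIntegral_mono_set hGint ?_ (Filter.Eventually.of_forall hsub')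
          exact Filter.Eventually.of_forall hGnn
  calc ‖f (Φ (u, t))‖ ^ 2 ≤ (∫ s in Set.uIoc 0 t, ‖D s‖) ^ 2 :=
        pow_le_pow_left₀ (norm_nonneg _) hnorm 2
    _ ≤ |t| * ∫ s in Set.uIoc 0 t, ‖D s‖ ^ 2 := hcs
    _ ≤ |t| * ∫ s in Set.Ioo (-ε) ε, G s :=
        mul_le_mul_of_nonneg_left hGmono (abs_nonneg t)

end Tub


end

theorem tubular_poincare_first_order
    (ε : ℝ) (hε : 0 < ε)
    (Φ : E2 × ℝ → E3)
    (S : Set (E2 × ℝ)) (hS : S = (Metric.ball (0:E2) 1) ×ˢ Set.Ioo (-ε) ε)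
    (hΦ : ContDiffOn ℝ 2 Φ S) (hinj : Set.InjOn Φ S)
    (c C : ℝ) (hc : 0 < c)
    (hJ : ∀ p ∈ S, c ≤ tubJac Φ p ∧ tubJac Φ p ≤ C)
    (hunit : ∀ p ∈ S, ‖fderiv ℝ Φ p ((0:E2), (1:ℝ))‖ = 1)
    (hratio : ∀ u ∈ Metric.ball (0:E2) 1, ∀ t ∈ Set.Ioo (-ε) ε, ∀ s ∈ Set.Ioo (-ε) ε,
      tubJac Φ (u, t) ≤ 2 * tubJac Φ (u, s))
    (f : E3 → E3) (hf : MemH2 (Φ '' S) f)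
    (hf0 : ∀ᵐ u : E2, u ∈ Metric.ball (0:E2) 1 → f (Φ (u, 0)) = 0) :
    (∫ x in Φ '' S, ‖f x‖ ^ 2) ≤ 2 * ε ^ 2 * ∫ x in Φ '' S, gradSq f x := by
  classical
  obtain ⟨⟨hfd, hint2, hintG⟩, -⟩ := hf
  have hSmeas : MeasurableSet S := Tub.hS_meas hS
  have hopen : IsOpen (Φ '' S) := Tub.himg_open hS hΦ hc (fun p hp => (hJ p hp).1)
  set μ2 : Measure E2 := volume.restrict (Metric.ball (0:E2) 1) with hμ2
  set ν : Measure ℝ := volume.restrict (Set.Ioo (-ε) ε) with hν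
  have hres : (volume : Measure (E2 × ℝ)).restrict S = μ2.prod ν := by
    rw [hS, Measure.volume_eq_prod, Measure.prod_restrict]
  -- notation
  set Jof : E2 × ℝ → ENNReal := fun p => ENNReal.ofReal (tubJac Φ p) with hJof
  set Fof : E2 × ℝ → ENNReal := fun p => ENNReal.ofReal (‖f (Φ p)‖ ^ 2) with hFof
  set Gof : E2 × ℝ → ENNReal := fun p => ENNReal.ofReal (gradSq f (Φ p)) with hGof
  -- change of variables
  have hcovF : ∫⁻ x in Φ '' S, ENNReal.ofReal (‖f x‖ ^ 2)
      = ∫⁻ p in S, Jof p * Fof p := Tub.cov hS hΦ hinj _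
  have hcovG : ∫⁻ x in Φ '' S, ENNReal.ofReal (gradSq f x)
      = ∫⁻ p in S, Jof p * Gof p := Tub.cov hS hΦ hinj _
  -- real-lintegral conversions
  have hLreal : ENNReal.ofReal (∫ x in Φ '' S, ‖f x‖ ^ 2)
      = ∫⁻ x in Φ '' S, ENNReal.ofReal (‖f x‖ ^ 2) :=
    ofReal_integral_eq_lintegral_ofReal hint2
      (Filter.Eventually.of_forall fun x => pow_two_nonneg _)
  have hRreal : ENNReal.ofReal (∫ x in Φ '' S, gradSq f x)
      = ∫⁻ x in Φ '' S, ENNReal.ofReal (gradSq f x) :=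
    ofReal_integral_eq_lintegral_ofReal hintG
      (Filter.Eventually.of_forall fun x => Tub.gradSq_nonneg f x)
  -- measurability
  have hΦm : AEMeasurable Φ (volume.restrict S) := hΦ.continuousOn.aemeasurable hSmeas
  have hfΦ : AEMeasurable (fun p => f (Φ p)) (volume.restrict S) :=
    (hfd.continuousOn.comp hΦ.continuousOn (Set.mapsTo_image Φ S)).aemeasurable hSmeas
  have hGr : AEMeasurable (fun p => gradSq f (Φ p)) (volume.restrict S) :=
    (Tub.measurable_gradSq f).comp_aemeasurable hΦm
  have hJm : Measurable Jof := (Tub.measurable_tubJac Φ).ennreal_ofReal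
  have hGofm : AEMeasurable Gof (volume.restrict S) := hGr.ennreal_ofReal
  have hFofm : AEMeasurable Fof (volume.restrict S) :=
    ((hfΦ.norm.pow_const 2).ennreal_ofReal)
  have hJGm : AEMeasurable (fun p => Jof p * Gof p) (μ2.prod ν) := by
    rw [← hres]; exact hJm.aemeasurable.mul hGofm
  have hJFm : AEMeasurable (fun p => Jof p * Fof p) (μ2.prod ν) := by
    rw [← hres]; exact hJm.aemeasurable.mul hFofm
  -- finiteness of R
  set R : ENNReal := ∫⁻ p in S, Jof p * Gof p with hR
  have hReq : R = ENNReal.ofReal (∫ x in Φ '' S, gradSq f x) := by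
    rw [hRreal, hcovG]
  have hRfin : R ≠ ⊤ := by rw [hReq]; exact ENNReal.ofReal_ne_top
  -- slice integrability for a.e. u
  have hlow : ENNReal.ofReal c * ∫⁻ p in S, Gof p ≤ R := by
    rw [← lintegral_const_mul' _ _ ENNReal.ofReal_ne_top]
    refine lintegral_mono_ae ?_
    filter_upwards [ae_restrict_mem hSmeas] with p hp
    exact mul_le_mul_left (ENNReal.ofReal_le_ofReal (hJ p hp).1) _
  have hGfin : ∫⁻ p in S, Gof p ≠ ⊤ := by
    intro htop
    rw [htop, ENNReal.mul_top (ENNReal.ofReal_pos.mpr hc).ne'] at hlow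
    exact hRfin (top_le_iff.mp hlow)
  -- measurable representative of the real slice function
  set Gr' : E2 × ℝ → ℝ := hGr.mk _ with hGr'
  have hGr'meas : Measurable Gr' := hGr.measurable_mk
  have hGr'ae : (fun p => gradSq f (Φ p)) =ᵐ[μ2.prod ν] Gr' := by
    rw [← hres]; exact hGr.ae_eq_mk
  have hsliceae : ∀ᵐ u ∂μ2, (fun s => gradSq f (Φ (u, s))) =ᵐ[ν] (fun s => Gr' (u, s)) :=
    Measure.ae_ae_of_ae_prod hGr'ae
  -- a.e. finiteness of slice lintegrals
  have hGprod : ∫⁻ p, Gof p ∂(μ2.prod ν) ≠ ⊤ := by rw [← hres]; exact hGfin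
  have hGofm' : AEMeasurable Gof (μ2.prod ν) := by rw [← hres]; exact hGofm
  have hTon : ∫⁻ u, (∫⁻ s, Gof (u, s) ∂ν) ∂μ2 ≠ ⊤ := by
    rw [← lintegral_prod _ hGofm']; exact hGprod
  have hslicemeas : AEMeasurable (fun u => ∫⁻ s, Gof (u, s) ∂ν) μ2 := by
    have h1 : Measurable (fun u => ∫⁻ s, ENNReal.ofReal (Gr' (u, s)) ∂ν) := by
      refine Measurable.lintegral_prod_right ?_
      exact hGr'meas.ennreal_ofReal
    refine (h1.aemeasurable).congr ?_
    filter_upwards [hsliceae] with u hu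
    refine (lintegral_congr_ae ?_).symm
    filter_upwards [hu] with s hs
    rw [hGof]
    simp only
    rw [hs]
  have hslicefin : ∀ᵐ u ∂μ2, ∫⁻ s, Gof (u, s) ∂ν < ⊤ := ae_lt_top' hslicemeas hTon
  -- slice integrability
  have hGnnall : ∀ p, 0 ≤ gradSq f (Φ p) := fun p => Tub.gradSq_nonneg f (Φ p)
  have hsliceint : ∀ᵐ u ∂μ2, IntegrableOn (fun s => gradSq f (Φ (u, s))) (Set.Ioo (-ε) ε) := by
    filter_upwards [hsliceae, hslicefin] with u h1 h2
    constructor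
    · exact ((hGr'meas.comp measurable_prodMk_left).aestronglyMeasurable).congr h1.symm
    · rw [hasFiniteIntegral_iff_ofReal (Filter.Eventually.of_forall fun s => hGnnall (u, s))]
      exact h2
  -- hf0 on μ2
  have hf0' : ∀ᵐ u ∂μ2, u ∈ Metric.ball (0:E2) 1 → f (Φ (u, 0)) = 0 := ae_restrict_of_ae hf0
  -- per-u kernel bound
  set K : E2 → ENNReal := fun u => ∫⁻ s, Jof (u, s) * Gof (u, s) ∂ν with hK
  have hinner : ∀ᵐ u ∂μ2,
      (∫⁻ t, Jof (u, t) * Fof (u, t) ∂ν) ≤ 2 * ENNReal.ofReal (ε ^ 2) * K u := by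
    filter_upwards [hsliceint, hf0', ae_restrict_mem Metric.isOpen_ball.measurableSet]
      with u hGint hf0u hu
    have hf0u' : f (Φ (u, 0)) = 0 := hf0u hu
    have step1 : (∫⁻ t, Jof (u, t) * Fof (u, t) ∂ν)
        ≤ ∫⁻ t, ENNReal.ofReal |t| * (2 * K u) ∂ν := by
      refine lintegral_mono_ae ?_
      filter_upwards [ae_restrict_mem measurableSet_Ioo] with t ht
      have hclaim := Tub.pointwise_claim hε hS hΦ hopen hunit hfd hu hf0u' hGint ht
      have e1 : Fof (u, t) ≤ ENNReal.ofReal |t|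
          * ENNReal.ofReal (∫ s in Set.Ioo (-ε) ε, gradSq f (Φ (u, s))) := by
        rw [← ENNReal.ofReal_mul (abs_nonneg t)]
        exact ENNReal.ofReal_le_ofReal hclaim
      have e2 : ENNReal.ofReal (∫ s in Set.Ioo (-ε) ε, gradSq f (Φ (u, s)))
          = ∫⁻ s, Gof (u, s) ∂ν :=
        ofReal_integral_eq_lintegral_ofReal hGint
          (Filter.Eventually.of_forall fun s => hGnnall (u, s))
      have e3 : Jof (u, t) * ∫⁻ s, Gof (u, s) ∂ν
          = ∫⁻ s, Jof (u, t) * Gof (u, s) ∂ν :=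
        (lintegral_const_mul' _ _ ENNReal.ofReal_ne_top).symm
      have e4 : ∫⁻ s, Jof (u, t) * Gof (u, s) ∂ν ≤ ∫⁻ s, 2 * (Jof (u, s) * Gof (u, s)) ∂ν := by
        refine lintegral_mono_ae ?_
        filter_upwards [ae_restrict_mem measurableSet_Ioo] with s hs
        have : Jof (u, t) ≤ 2 * Jof (u, s) := by
          calc Jof (u, t) ≤ ENNReal.ofReal (2 * tubJac Φ (u, s)) :=
                ENNReal.ofReal_le_ofReal (hratio u hu t ht s hs)
            _ = 2 * Jof (u, s) := by
                rw [ENNReal.ofReal_mul (by norm_num : (0:ℝ) ≤ 2)]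
                norm_num
                rfl
        calc Jof (u, t) * Gof (u, s) ≤ (2 * Jof (u, s)) * Gof (u, s) :=
              mul_le_mul_left this _
          _ = 2 * (Jof (u, s) * Gof (u, s)) := by ring
      have e5 : ∫⁻ s, 2 * (Jof (u, s) * Gof (u, s)) ∂ν = 2 * K u :=
        lintegral_const_mul' 2 _ (by norm_num)
      calc Jof (u, t) * Fof (u, t)
          ≤ Jof (u, t) * (ENNReal.ofReal |t|
            * ENNReal.ofReal (∫ s in Set.Ioo (-ε) ε, gradSq f (Φ (u, s)))) :=
            mul_le_mul_right e1 _
        _ = ENNReal.ofReal |t| * (Jof (u, t)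
            * ENNReal.ofReal (∫ s in Set.Ioo (-ε) ε, gradSq f (Φ (u, s)))) := by ring
        _ = ENNReal.ofReal |t| * (Jof (u, t) * ∫⁻ s, Gof (u, s) ∂ν) := by rw [e2]
        _ = ENNReal.ofReal |t| * ∫⁻ s, Jof (u, t) * Gof (u, s) ∂ν := by rw [e3]
        _ ≤ ENNReal.ofReal |t| * ∫⁻ s, 2 * (Jof (u, s) * Gof (u, s)) ∂ν :=
            mul_le_mul_right e4 _
        _ = ENNReal.ofReal |t| * (2 * K u) := by rw [e5]
    have step2 : ∫⁻ t, ENNReal.ofReal |t| * (2 * K u) ∂ν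
        = (∫⁻ t, ENNReal.ofReal |t| ∂ν) * (2 * K u) :=
      lintegral_mul_const _ (measurable_abs.ennreal_ofReal)
    calc (∫⁻ t, Jof (u, t) * Fof (u, t) ∂ν)
        ≤ ∫⁻ t, ENNReal.ofReal |t| * (2 * K u) ∂ν := step1
      _ = (∫⁻ t, ENNReal.ofReal |t| ∂ν) * (2 * K u) := step2
      _ = ENNReal.ofReal (ε ^ 2) * (2 * K u) := by rw [hν, Tub.lintegral_abs_Ioo hε]
      _ = 2 * ENNReal.ofReal (ε ^ 2) * K u := by ring
  -- assemble
  set L : ENNReal := ∫⁻ p in S, Jof p * Fof p with hL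
  have hmain : L ≤ ENNReal.ofReal (2 * ε ^ 2) * R := by
    have hLprod : L = ∫⁻ u, (∫⁻ t, Jof (u, t) * Fof (u, t) ∂ν) ∂μ2 := by
      rw [hL, hres, lintegral_prod _ hJFm]
    have hRprod : ∫⁻ u, K u ∂μ2 = R := by
      rw [hR, hres, lintegral_prod _ hJGm]
    calc L = ∫⁻ u, (∫⁻ t, Jof (u, t) * Fof (u, t) ∂ν) ∂μ2 := hLprod
      _ ≤ ∫⁻ u, 2 * ENNReal.ofReal (ε ^ 2) * K u ∂μ2 := lintegral_mono_ae hinner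
      _ = 2 * ENNReal.ofReal (ε ^ 2) * ∫⁻ u, K u ∂μ2 := by
          exact lintegral_const_mul' _ _ (by
            exact ENNReal.mul_ne_top (by norm_num) ENNReal.ofReal_ne_top)
      _ = 2 * ENNReal.ofReal (ε ^ 2) * R := by rw [hRprod]
      _ = ENNReal.ofReal (2 * ε ^ 2) * R := by
          rw [ENNReal.ofReal_mul (by norm_num : (0:ℝ) ≤ 2)]
          norm_num
  -- conclude in the reals
  have hfinal : ENNReal.ofReal (∫ x in Φ '' S, ‖f x‖ ^ 2)
      ≤ ENNReal.ofReal (2 * ε ^ 2 * ∫ x in Φ '' S, gradSq f x) := by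
    rw [hLreal, hcovF]
    calc L ≤ ENNReal.ofReal (2 * ε ^ 2) * R := hmain
      _ = ENNReal.ofReal (2 * ε ^ 2) * ENNReal.ofReal (∫ x in Φ '' S, gradSq f x) := by
          rw [hReq]
      _ = ENNReal.ofReal (2 * ε ^ 2 * ∫ x in Φ '' S, gradSq f x) :=
          (ENNReal.ofReal_mul (by positivity)).symm
  have hRHSnn : 0 ≤ 2 * ε ^ 2 * ∫ x in Φ '' S, gradSq f x := by
    have : 0 ≤ ∫ x in Φ '' S, gradSq f x :=
      integral_nonneg fun x => Tub.gradSq_nonneg f x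
    positivity
  exact (ENNReal.ofReal_le_ofReal_iff hRHSnn).mp hfinal
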